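/- For the discrete nonholonomic free particle reduced by its horizontal symmetry G = {0}×ℝ at momentum level μ ∈ ℝ, the reduced forced discrete system on Q/G = ℝ² (coordinates r = (r', r'')) has Lagrangian L̆_d(r_k, r_{k+1}) = (m/2)((r'_{k+1}−r'_k)² + (r''_{k+1}−r''_k)² + (μ/m)²), variational constraints 𝒟̆_r = span(∂_{r'} + r'∂_{r''}), kinematic constraints r''_{k+1}−r''_k = ((r'_{k+1})²−(r'_k)²)/2, and vanishing reduced forces; its discrete Lagrange–D'Alembert equations are −(r'_{k+1}−r'_k)+(r'_k−r'_{k-1}) = λ_k r'_k, −(r''_{k+1}−r''_k)+(r''_k−r''_{k-1}) = −λ_k, together with the kinematic constraint. -/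

import Mathlib

/-- Discrete Lagrangian of the discretized nonholonomic free particle on ℝ³. -/
noncomputable def partLd19 (m : ℝ) (q₀ q₁ : ℝ × ℝ × ℝ) : ℝ :=
  m / 2 * ((q₁.1 - q₀.1) ^ 2 + (q₁.2.1 - q₀.2.1) ^ 2 + (q₁.2.2 - q₀.2.2) ^ 2)

/-- The reduced discrete Lagrangian on `Q/G = ℝ²` at momentum level `μ`. -/
noncomputable def partLred (m μ : ℝ) (r₀ r₁ : ℝ × ℝ) : ℝ :=
  m / 2 * ((r₁.1 - r₀.1) ^ 2 + (r₁.2 - r₀.2) ^ 2 + (μ / m) ^ 2)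


lemma hasFDeriv1 (m μ : ℝ) (b p : ℝ × ℝ) :
    HasFDerivAt (fun x : ℝ × ℝ => partLred m μ x b)
      ((m * (p.1 - b.1)) • ContinuousLinearMap.fst ℝ ℝ ℝ
        + (m * (p.2 - b.2)) • ContinuousLinearMap.snd ℝ ℝ ℝ) p := by
  have h1 : HasFDerivAt (fun x : ℝ × ℝ => b.1 - x.1)
      (-(ContinuousLinearMap.fst ℝ ℝ ℝ)) p := (hasFDerivAt_fst (p := p)).const_sub _
  have h2 : HasFDerivAt (fun x : ℝ × ℝ => b.2 - x.2)
      (-(ContinuousLinearMap.snd ℝ ℝ ℝ)) p := (hasFDerivAt_snd (p := p)).const_sub _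
  have H := ((((h1.mul h1)).add (h2.mul h2)).add_const ((μ/m)^2)).const_mul (m/2)
  have hf : (fun x : ℝ × ℝ => partLred m μ x b)
      = fun x : ℝ × ℝ => m/2 * ((b.1 - x.1) * (b.1 - x.1) + (b.2 - x.2) * (b.2 - x.2) + (μ/m)^2) := by
    funext x; simp only [partLred]; ring
  rw [hf]
  refine H.congr_fderiv ?_
  ext <;> simp <;> ring

lemma hasFDeriv2 (m μ : ℝ) (a p : ℝ × ℝ) :
    HasFDerivAt (fun y : ℝ × ℝ => partLred m μ a y)
      ((m * (p.1 - a.1)) • ContinuousLinearMap.fst ℝ ℝ ℝ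
        + (m * (p.2 - a.2)) • ContinuousLinearMap.snd ℝ ℝ ℝ) p := by
  have h1 : HasFDerivAt (fun y : ℝ × ℝ => y.1 - a.1)
      (ContinuousLinearMap.fst ℝ ℝ ℝ) p := (hasFDerivAt_fst (p := p)).sub_const _
  have h2 : HasFDerivAt (fun y : ℝ × ℝ => y.2 - a.2)
      (ContinuousLinearMap.snd ℝ ℝ ℝ) p := (hasFDerivAt_snd (p := p)).sub_const _
  have H := ((((h1.mul h1)).add (h2.mul h2)).add_const ((μ/m)^2)).const_mul (m/2)
  have hf : (fun y : ℝ × ℝ => partLred m μ a y)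
      = fun y : ℝ × ℝ => m/2 * ((y.1 - a.1) * (y.1 - a.1) + (y.2 - a.2) * (y.2 - a.2) + (μ/m)^2) := by
    funext y; simp only [partLred]; ring
  rw [hf]
  refine H.congr_fderiv ?_
  ext <;> simp <;> ring

/-- For the discrete nonholonomic free particle reduced by its
horizontal symmetry `G = {0}×ℝ` at momentum level `μ`:
(a) the reduced Lagrangian equals `L_d` evaluated on a point over `r₀` and its
`𝒥_μ`-horizontal lift `(r₁', r₁'', μ/m + z)`;
(b) a discrete curve `r_k` in `ℝ²` satisfies the discrete Lagrange–D'Alembert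
principle — i.e. `D₁L̆_d(r_k,r_{k+1}) + D₂L̆_d(r_{k-1},r_k)` annihilates the
variational constraints `𝒟̆ = span(∂_{r'} + r'∂_{r''})` and the kinematic
constraint `r''_{k+1} − r''_k = ((r'_{k+1})² − (r'_k)²)/2` holds — if and only
if there are multipliers `λ_k` with
`−(r'_{k+1}−r'_k)+(r'_k−r'_{k-1}) = λ_k r'_k`,
`−(r''_{k+1}−r''_k)+(r''_k−r''_{k-1}) = −λ_k`, and the kinematic constraint. -/
theorem particle_reduced_dla (m μ : ℝ) (hm : 0 < m) :
    -- (a) the reduced Lagrangian via the horizontal lift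
    (∀ (r₀ r₁ : ℝ × ℝ) (z : ℝ),
      partLred m μ r₀ r₁ = partLd19 m (r₀.1, r₀.2, z) (r₁.1, r₁.2, μ / m + z))
    -- (b) characterization of the discrete Lagrange–D'Alembert equations
    ∧ ∀ r : ℕ → ℝ × ℝ,
      ((∀ k : ℕ,
          (fderiv ℝ (fun x => partLred m μ x (r (k + 2))) (r (k + 1))
              + fderiv ℝ (fun y => partLred m μ (r k) y) (r (k + 1)))
            ((1, (r (k + 1)).1) : ℝ × ℝ) = 0
          ∧ (r (k + 1)).2 - (r k).2 = ((r (k + 1)).1 ^ 2 - (r k).1 ^ 2) / 2)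
      ↔ ∃ lam : ℕ → ℝ, ∀ k : ℕ,
          (-((r (k + 2)).1 - (r (k + 1)).1) + ((r (k + 1)).1 - (r k).1)
              = lam k * (r (k + 1)).1)
          ∧ (-((r (k + 2)).2 - (r (k + 1)).2) + ((r (k + 1)).2 - (r k).2)
              = -(lam k))
          ∧ (r (k + 1)).2 - (r k).2 = ((r (k + 1)).1 ^ 2 - (r k).1 ^ 2) / 2) := by
  
  constructor
  · intro r₀ r₁ z
    simp only [partLred, partLd19]
    ring
  · intro r
    have key : ∀ k : ℕ,
        (fderiv ℝ (fun x => partLred m μ x (r (k + 2))) (r (k + 1))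
            + fderiv ℝ (fun y => partLred m μ (r k) y) (r (k + 1)))
          ((1, (r (k + 1)).1) : ℝ × ℝ)
        = m * ((-((r (k + 2)).1 - (r (k + 1)).1) + ((r (k + 1)).1 - (r k).1))
            + (r (k + 1)).1 * (-((r (k + 2)).2 - (r (k + 1)).2) + ((r (k + 1)).2 - (r k).2))) := by
      intro k
      rw [(hasFDeriv1 m μ (r (k + 2)) (r (k + 1))).fderiv,
        (hasFDeriv2 m μ (r k) (r (k + 1))).fderiv]
      simp [ContinuousLinearMap.add_apply, ContinuousLinearMap.smul_apply]
      ring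
    constructor
    · intro h
      refine ⟨fun k => -(-((r (k + 2)).2 - (r (k + 1)).2) + ((r (k + 1)).2 - (r k).2)), fun k => ?_⟩
      obtain ⟨h1, h2⟩ := h k
      rw [key k] at h1
      have h1' : (-((r (k + 2)).1 - (r (k + 1)).1) + ((r (k + 1)).1 - (r k).1))
          + (r (k + 1)).1 * (-((r (k + 2)).2 - (r (k + 1)).2) + ((r (k + 1)).2 - (r k).2)) = 0 := by
        rcases mul_eq_zero.mp h1 with h | h
        · exact absurd h hm.ne'
        · exact h
      refine ⟨by linear_combination h1', by ring, h2⟩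
    · rintro ⟨lam, hlam⟩ k
      obtain ⟨h1, h2, h3⟩ := hlam k
      refine ⟨?_, h3⟩
      rw [key k, h1, h2]
      ring
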